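/- arXiv:1710.03707 — 4 statements merged into one kernel-verified Lean document; each statement's English description precedes it below -/
import Mathlib

section
/- Let Λ be a finite group of cardinality ℓ with a fixed bijection ‖·‖ : Λ → {0,…,ℓ−1}. Define 𝔫 on the restricted wreath product G = (⊕_ℤ Λ) ⋊ ℤ by 𝔫(μ, k) = Σ_{n ≥ k} ‖μ_n‖ · ℓ^{n−k} (a finite sum since μ has finite support). Then for any g = (μ, k) ∈ G and any λ ∈ Λ, 𝔫(g · t⁻¹ · [λ]₀) = ℓ · 𝔫(g) + ‖μ_{k−1} · λ‖, where t = (1, 1) ∈ G is the generator of ℤ and [λ]₀ ∈ ⊕_ℤ Λ is the element supported at 0 with value λ. -/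
/-- The subgroup of finitely supported functions `ℤ → Λ`, i.e. `⊕_ℤ Λ`. -/
def FinSupp (Λ : Type*) [Group Λ] : Subgroup (ℤ → Λ) where
  carrier := {f | (Function.mulSupport f).Finite}
  one_mem' := by simpa using Set.finite_empty
  mul_mem' := fun hf hg => ((hf.union hg).subset (Function.mulSupport_mul _ _))
  inv_mem' := fun hf => by simpa using hf

/-- The shift automorphism of `⊕_ℤ Λ` by `k`: `(shift k f) n = f (n - k)`. -/
def shiftAut (Λ : Type*) [Group Λ] (k : ℤ) : MulAut (FinSupp Λ) where
  toFun f := ⟨fun n => f.val (n - k), (f.prop.image (· + k)).subset (by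
    intro n hn
    exact ⟨n - k, hn, by ring⟩)⟩
  invFun f := ⟨fun n => f.val (n + k), (f.prop.image (· - k)).subset (by
    intro n hn
    exact ⟨n + k, hn, by ring⟩)⟩
  left_inv f := by ext n; simp
  right_inv f := by ext n; simp
  map_mul' f g := rfl

/-- The lamplighter group `G = (⊕_ℤ Λ) ⋊ ℤ`, with the generator of `ℤ` acting by the
shift `t [λ]_i t⁻¹ = [λ]_{i+1}`. -/
abbrev Lamp (Λ : Type*) [Group Λ] :=
  SemidirectProduct (FinSupp Λ) (Multiplicative ℤ) (zpowersHom _ (shiftAut Λ 1))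

/-- The generator `t` of the `ℤ` factor of the lamplighter group. -/
def tGen (Λ : Type*) [Group Λ] : Lamp Λ :=
  SemidirectProduct.inr (Multiplicative.ofAdd 1)

/-- `[λ]_i`: the element of `⊕_ℤ Λ` supported at coordinate `i` with value `λ`. -/
def lam {Λ : Type*} [Group Λ] (i : ℤ) (x : Λ) : FinSupp Λ :=
  ⟨fun n => if n = i then x else 1, (Set.finite_singleton i).subset (by
    intro n hn
    by_contra h
    exact hn (if_neg h))⟩

/-- `𝔫(μ tᵏ) = Σ_{n ≥ k, n ∈ supp μ} ‖μ_n‖ ℓ^{n−k}`. -/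
noncomputable def nval {Λ : Type*} [Group Λ] (norm : Λ → ℕ) (ℓ : ℕ) (g : Lamp Λ) : ℕ :=
  ∑ n ∈ (g.left.prop.toFinset.filter (fun n => Multiplicative.toAdd g.right ≤ n)),
    norm (g.left.val n) * ℓ ^ (n - Multiplicative.toAdd g.right).toNat

section Aux
variable {Λ : Type*} [Group Λ]

lemma shift_pow (m : ℤ) : ∀ (f : FinSupp Λ) (n : ℤ), ((shiftAut Λ 1 ^ m) f).val n = f.val (n - m) := by
  induction m using Int.induction_on with
  | zero => intro f n; simp
  | succ i ih =>
      intro f n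
      rw [zpow_add_one, MulAut.mul_apply, ih]
      show f.val (n - i - 1) = _
      ring_nf
  | pred i ih =>
      intro f n
      rw [zpow_sub_one, MulAut.mul_apply, ih]
      show f.val (n - (-i) + 1) = _
      ring_nf

lemma zp (m : Multiplicative ℤ) (f : FinSupp Λ) (n : ℤ) :
    ((zpowersHom (MulAut (FinSupp Λ)) (shiftAut Λ 1) m) f).val n
      = f.val (n - Multiplicative.toAdd m) := by
  show ((shiftAut Λ 1 ^ Multiplicative.toAdd m) f).val n = _
  exact shift_pow _ f n

lemma toAdd_aux (g : Lamp Λ) :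
    Multiplicative.toAdd (g.right * (Multiplicative.ofAdd (1:ℤ))⁻¹)
        = Multiplicative.toAdd g.right - 1 := by
  simp; rfl

lemma h_left (g : Lamp Λ) (x : Λ) (n : ℤ) :
    (g * (tGen Λ)⁻¹ * SemidirectProduct.inl (lam 0 x)).left.val n
      = g.left.val n * (if n = Multiplicative.toAdd g.right - 1 then x else 1) := by
  simp only [tGen, SemidirectProduct.mul_left, SemidirectProduct.inv_left,
    SemidirectProduct.left_inl, SemidirectProduct.inv_right, SemidirectProduct.left_inr,
    SemidirectProduct.right_inr, SemidirectProduct.mul_right, inv_one, map_one,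
    MulAut.one_apply, mul_one]
  rw [Subgroup.coe_mul, Pi.mul_apply]
  congr 1
  rw [zp, toAdd_aux]
  show (if n - _ = (0:ℤ) then x else 1) = _
  congr 1
  simp only [eq_iff_iff]
  omega

lemma h_right (g : Lamp Λ) (x : Λ) :
    Multiplicative.toAdd (g * (tGen Λ)⁻¹ * SemidirectProduct.inl (lam 0 x)).right
      = Multiplicative.toAdd g.right - 1 := by
  simp only [tGen, SemidirectProduct.mul_right, SemidirectProduct.inv_right,
    SemidirectProduct.right_inr, SemidirectProduct.right_inl, mul_one]
  exact toAdd_aux g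

lemma mem_tf (f : FinSupp Λ) (p : f.val ∈ FinSupp Λ) (n : ℤ) :
    n ∈ Set.Finite.toFinset (s := Function.mulSupport f.val) p ↔ f.val n ≠ 1 :=
  (Set.Finite.mem_toFinset _).trans Function.mem_mulSupport

end Aux

/-- For `g = μ tᵏ ∈ G` and `λ ∈ Λ`,
`𝔫(g · t⁻¹ · [λ]₀) = ℓ · 𝔫(g) + ‖μ_{k−1} · λ‖`, where `‖·‖ : Λ ≃ {0,…,ℓ−1}` is a fixed
bijection (with `‖1_Λ‖ = 0`). -/
theorem nval_mul_tinv_lam {Λ : Type*} [Group Λ] [Fintype Λ] {ℓ : ℕ} (e : Λ ≃ Fin ℓ)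
    (he : (e 1 : ℕ) = 0) (g : Lamp Λ) (x : Λ) :
    nval (fun y => (e y : ℕ)) ℓ (g * (tGen Λ)⁻¹ * SemidirectProduct.inl (lam 0 x)) =
      ℓ * nval (fun y => (e y : ℕ)) ℓ g +
        (e (g.left.val (Multiplicative.toAdd g.right - 1) * x) : ℕ) := by
  classical
  set k := Multiplicative.toAdd g.right with hk
  set h := g * (tGen Λ)⁻¹ * SemidirectProduct.inl (lam 0 x) with hh
  have hhr : Multiplicative.toAdd h.right = k - 1 := h_right g x
  have hhl : ∀ n, h.left.val n = g.left.val n * (if n = k - 1 then x else 1) := h_left g x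
  set F : Finset ℤ := ((g.left.prop.toFinset ∪ h.left.prop.toFinset) ∪ {k-1}).filter
    (fun n => k-1 ≤ n) with hF
  have hmemF : ∀ n, n ∈ F ↔ ((g.left.val n ≠ 1 ∨ h.left.val n ≠ 1 ∨ n = k-1) ∧ k-1 ≤ n) := by
    intro n
    simp [hF, Set.Finite.mem_toFinset, Function.mem_mulSupport, mem_tf]
    tauto
  have L1 : nval (fun y => (e y : ℕ)) ℓ h
      = ∑ n ∈ F, (e (h.left.val n) : ℕ) * ℓ ^ (n - (k-1)).toNat := by
    rw [nval, hhr]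
    refine Finset.sum_subset ?_ ?_
    · intro n hn
      rw [Finset.mem_filter, mem_tf] at hn
      rw [hmemF]
      exact ⟨Or.inr (Or.inl hn.1), hn.2⟩
    · intro n hn hn'
      rw [hmemF] at hn
      rw [Finset.mem_filter, mem_tf] at hn'
      have : h.left.val n = 1 := by
        by_contra hc; exact hn' ⟨hc, hn.2⟩
      rw [this, he, zero_mul]
  have L2 : nval (fun y => (e y : ℕ)) ℓ g
      = ∑ n ∈ F.filter (fun n => k ≤ n), (e (g.left.val n) : ℕ) * ℓ ^ (n - k).toNat := by
    rw [nval]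
    refine Finset.sum_subset ?_ ?_
    · intro n hn
      rw [Finset.mem_filter, mem_tf] at hn
      rw [Finset.mem_filter, hmemF]
      exact ⟨⟨Or.inl hn.1, by omega⟩, hn.2⟩
    · intro n hn hn'
      rw [Finset.mem_filter] at hn
      rw [Finset.mem_filter, mem_tf] at hn'
      have : g.left.val n = 1 := by
        by_contra hc; exact hn' ⟨hc, hn.2⟩
      rw [this, he, zero_mul]
  rw [L1, L2]
  rw [← Finset.sum_filter_add_sum_filter_not F (fun n => k ≤ n)]
  have hsingle : F.filter (fun n => ¬ k ≤ n) = {k-1} := by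
    ext n
    rw [Finset.mem_filter, hmemF, Finset.mem_singleton]
    constructor
    · rintro ⟨⟨_, hn⟩, hn'⟩; omega
    · rintro rfl
      exact ⟨⟨Or.inr (Or.inr rfl), le_refl _⟩, by omega⟩
  rw [hsingle, Finset.sum_singleton]
  have e1 : ((k-1) - (k-1)).toNat = 0 := by omega
  rw [e1, pow_zero, mul_one, hhl, if_pos rfl]
  congr 1
  rw [Finset.mul_sum]
  refine Finset.sum_congr rfl ?_
  intro n hn
  rw [Finset.mem_filter] at hn
  rw [hhl, if_neg (by omega), mul_one]
  have e2 : (n - (k-1)).toNat = (n - k).toNat + 1 := by omega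
  rw [e2, pow_succ]
  ring
end

section
/- Let G = (⊕_ℤ Λ) ⋊ ℤ be a lamplighter group, Γ a finite index normal subgroup of G, and L = Γ ∩ (⊕_ℤ Λ). Then every μ ∈ ⊕_ℤ Λ can be written as μ = μ_L · μ₋ where μ_L ∈ L and μ₋ ∈ ⊕_{−ℕ} Λ, the subgroup of elements of ⊕_ℤ Λ supported on strictly negative coordinates. -/
section Aux

variable {Λ : Type*} [Group Λ]

lemma shift_zpow_apply (z : ℤ) (f : FinSupp Λ) (n : ℤ) :
    (((shiftAut Λ 1) ^ z) f).val n = f.val (n - z) := by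
  induction z using Int.induction_on generalizing f n with
  | zero => simp
  | succ k ih =>
      rw [zpow_add_one, MulAut.mul_apply, ih]
      show f.val (n - k - 1) = _
      congr 1; push_cast; ring
  | pred k ih =>
      rw [zpow_sub_one, MulAut.mul_apply, ih]
      show f.val (n - (-k) + 1) = _
      congr 1; push_cast; ring

lemma shift_zpow_lam (z i : ℤ) (x : Λ) :
    ((shiftAut Λ 1) ^ z) (lam i x) = lam (i + z) x := by
  apply Subtype.ext
  funext n
  rw [show ((((shiftAut Λ 1) ^ z) (lam i x)) : ℤ → Λ) n
      = (((shiftAut Λ 1) ^ z) (lam i x)).val n from rfl, shift_zpow_apply]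
  show (if n - z = i then x else 1) = (if n = i + z then x else 1)
  by_cases h : n = i + z
  · rw [if_pos h, if_pos (by omega)]
  · rw [if_neg (by omega), if_neg h]

variable [Fintype Λ] (Γ : Subgroup (Lamp Λ)) [Γ.Normal] [Γ.FiniteIndex]

open SemidirectProduct

lemma step_mem (f : FinSupp Λ) :
    (inl (f * (((shiftAut Λ 1) ^ (-(Γ.index : ℤ))) f)⁻¹) : Lamp Λ) ∈ Γ := by
  have ht : (tGen Λ) ^ Γ.index ∈ Γ := Subgroup.pow_index_mem Γ _
  have htk : (tGen Λ) ^ Γ.index = (inr (Multiplicative.ofAdd (Γ.index : ℤ)) : Lamp Λ) := by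
    rw [tGen, ← map_pow]
    congr 1
    simp [← ofAdd_nsmul]
  rw [htk] at ht
  have hz : (inr (Multiplicative.ofAdd (-(Γ.index : ℤ))) : Lamp Λ)
      = (inr (Multiplicative.ofAdd (Γ.index : ℤ)) : Lamp Λ)⁻¹ := by
    rw [← map_inv]; rfl
  have hφ : ((zpowersHom _ (shiftAut Λ 1)) (Multiplicative.ofAdd (-(Γ.index : ℤ)))) f
      = ((shiftAut Λ 1) ^ (-(Γ.index : ℤ))) f := by
    rw [zpowersHom_apply]; rfl
  have key : (inl (f * (((shiftAut Λ 1) ^ (-(Γ.index : ℤ))) f)⁻¹) : Lamp Λ)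
      = (inl f * inr (Multiplicative.ofAdd (-(Γ.index : ℤ))) * (inl f)⁻¹)
        * (inr (Multiplicative.ofAdd (-(Γ.index : ℤ))) : Lamp Λ)⁻¹ := by
    rw [map_mul, map_inv, ← hφ, inl_aut]
    simp only [map_inv]
    group
  rw [key]
  have hmem : (inr (Multiplicative.ofAdd (-(Γ.index : ℤ))) : Lamp Λ) ∈ Γ := by
    rw [hz]; exact inv_mem ht
  exact mul_mem (Subgroup.Normal.conj_mem ‹Γ.Normal› _ hmem (inl f)) (inv_mem hmem)

lemma lam_step (i : ℤ) (x : Λ) :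
    (inl (lam i x * (lam (i - Γ.index) x)⁻¹) : Lamp Λ) ∈ Γ := by
  have := step_mem Γ (lam i x)
  rwa [shift_zpow_lam, show i + -(Γ.index : ℤ) = i - Γ.index by ring] at this

lemma lam_decomp (i : ℤ) (x : Λ) :
    ∃ j : ℤ, j < 0 ∧ (inl (lam i x * (lam j x)⁻¹) : Lamp Λ) ∈ Γ := by
  suffices h : ∀ N : ℕ, ∀ i : ℤ, i < N →
      ∃ j : ℤ, j < 0 ∧ (inl (lam i x * (lam j x)⁻¹) : Lamp Λ) ∈ Γ by
    exact h (i.toNat + 1) i (by omega)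
  intro N
  induction N with
  | zero =>
      intro i hi
      exact ⟨i, by omega, by simp [one_mem]⟩
  | succ N ih =>
      intro i hi
      by_cases hneg : i < 0
      · exact ⟨i, hneg, by simp [one_mem]⟩
      · have hk : 1 ≤ Γ.index := Nat.one_le_iff_ne_zero.mpr Subgroup.FiniteIndex.index_ne_zero
        obtain ⟨j, hj, hmem⟩ := ih (i - Γ.index) (by omega)
        refine ⟨j, hj, ?_⟩
        have := mul_mem (lam_step Γ i x) hmem
        rwa [← map_mul, show (lam i x * (lam (i - Γ.index) x)⁻¹)
          * (lam (i - Γ.index) x * (lam j x)⁻¹) = lam i x * (lam j x)⁻¹ by group] at this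

end Aux

/-- if `Γ` is a finite index normal subgroup of `G` and
`L = Γ ∩ (⊕_ℤ Λ)`, then every `μ ∈ ⊕_ℤ Λ` can be written as `μ = μ_L · μ₋` with
`μ_L ∈ L` and `μ₋ ∈ ⊕_{−ℕ} Λ` (supported on strictly negative coordinates). -/
theorem finsupp_decomposition {Λ : Type*} [Group Λ] [Fintype Λ]
    (Γ : Subgroup (Lamp Λ)) [Γ.Normal] [Γ.FiniteIndex] (μ : FinSupp Λ) :
    ∃ μL μm : FinSupp Λ, SemidirectProduct.inl μL ∈ Γ ∧
      (∀ i : ℤ, 0 ≤ i → μm.val i = 1) ∧ μ = μL * μm := by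
  open SemidirectProduct in
  suffices h : ∀ N : ℕ, ∀ μ : FinSupp Λ,
      (μ.prop.toFinset.filter (fun n => 0 ≤ n)).card ≤ N →
      ∃ μL μm : FinSupp Λ, (inl μL : Lamp Λ) ∈ Γ ∧
        (∀ i : ℤ, 0 ≤ i → μm.val i = 1) ∧ μ = μL * μm by
    exact h _ μ le_rfl
  intro N
  induction N with
  | zero =>
      intro μ hcard
      refine ⟨1, μ, by simp [one_mem], ?_, by simp⟩
      intro i hi
      by_contra hne
      have : i ∈ μ.prop.toFinset.filter (fun n => 0 ≤ n) := by
        simp [Function.mulSupport, hne, hi]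
      have := Finset.card_pos.mpr ⟨i, this⟩
      omega
  | succ N ih =>
      intro μ hcard
      by_cases hempty : (μ.prop.toFinset.filter (fun n => 0 ≤ n)) = ∅
      · refine ⟨1, μ, by simp [one_mem], ?_, by simp⟩
        intro i hi
        by_contra hne
        have : i ∈ μ.prop.toFinset.filter (fun n => 0 ≤ n) := by
          simp [Function.mulSupport, hne, hi]
        simp [hempty] at this
      · obtain ⟨i, hi⟩ := Finset.nonempty_iff_ne_empty.mpr hempty
        simp only [Finset.mem_filter, Set.Finite.mem_toFinset, Function.mem_mulSupport] at hi
        obtain ⟨hisupp, hipos⟩ := hi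
        set x := μ.val i with hx
        set μ' := (lam i x)⁻¹ * μ with hμ'
        have hval : ∀ n, μ'.val n = ((lam i x).val n)⁻¹ * μ.val n := fun n => rfl
        have hsub : μ'.prop.toFinset.filter (fun n => 0 ≤ n) ⊆
            (μ.prop.toFinset.filter (fun n => 0 ≤ n)).erase i := by
          intro n hn
          simp only [Finset.mem_filter, Set.Finite.mem_toFinset,
            Function.mem_mulSupport] at hn
          obtain ⟨hn1, hn2⟩ := hn
          replace hn1 := (Set.Finite.mem_toFinset _).mp hn1
          rw [Finset.mem_erase]
          have hni : n ≠ i := by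
            rintro rfl
            apply hn1
            rw [hval, lam]
            simp [hx]
          refine ⟨hni, ?_⟩
          simp only [Finset.mem_filter, Set.Finite.mem_toFinset, Function.mem_mulSupport]
          refine ⟨?_, hn2⟩
          apply (Set.Finite.mem_toFinset _).mpr
          intro hmu
          apply hn1
          rw [hval, hmu, lam]
          simp [hni]
        have hcard' : (μ'.prop.toFinset.filter (fun n => 0 ≤ n)).card ≤ N := by
          have h1 := Finset.card_le_card hsub
          have h2 : i ∈ μ.prop.toFinset.filter (fun n => 0 ≤ n) := by
            simp only [Finset.mem_filter, Set.Finite.mem_toFinset, Function.mem_mulSupport]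
            exact ⟨hisupp, hipos⟩
          have h3 := Finset.card_erase_of_mem h2
          omega
        obtain ⟨aL, am, haL, ham, hadec⟩ := ih μ' hcard'
        obtain ⟨j, hj, hbL⟩ := lam_decomp Γ i x
        refine ⟨(lam i x * (lam j x)⁻¹) * (lam j x * aL * (lam j x)⁻¹),
          lam j x * am, ?_, ?_, ?_⟩
        · rw [map_mul]
          refine mul_mem hbL ?_
          rw [show (lam j x * aL * (lam j x)⁻¹ : FinSupp Λ)
            = lam j x * aL * (lam j x)⁻¹ from rfl, map_mul, map_mul, map_inv]
          exact Subgroup.Normal.conj_mem ‹Γ.Normal› _ haL _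
        · intro n hn
          have h1 : (lam j x).val n = 1 := by
            rw [lam]; simp only
            rw [if_neg (by omega)]
          have : (lam j x * am : FinSupp Λ).val n = (lam j x).val n * am.val n := rfl
          rw [this, h1, ham n hn, one_mul]
        · have : μ = lam i x * μ' := by rw [hμ']; group
          rw [this, hadec]
          group
end

section
/- Let Λ be a finite group of cardinality ℓ ≥ 3 and G = (⊕_ℤ Λ) ⋊ ℤ. Suppose σ : G → Bool satisfies: for every g ∈ G, σ(g) occurs strictly more than ℓ/2 but strictly fewer than ℓ times among the values σ(g t⁻¹ [λ]₀) for λ ∈ Λ. Then for all g ∈ G, all n ≥ 1, and all μ ∈ Λ_{−1}·Λ_{−2}⋯Λ_{−n} (elements of ⊕_ℤ Λ supported on coordinates −1 through −n), σ(g μ) = σ(g). -/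
/-- `b ℓ n` is `true` iff the number of `1`s in the base-`ℓ` expansion of `n` is odd. -/
def bSeq (ℓ n : ℕ) : Bool := decide (((Nat.digits ℓ n).count 1) % 2 = 1)

lemma phi_neg_val {Λ : Type*} [Group Λ] (f : FinSupp Λ) (i : ℤ) :
    (((zpowersHom (MulAut (FinSupp Λ)) (shiftAut Λ 1)) (Multiplicative.ofAdd (-1)) f).val i)
      = f.val (i + 1) := by
  rw [zpowersHom_apply]
  norm_num
  rfl

lemma tGen_inv {Λ : Type*} [Group Λ] :
    (tGen Λ)⁻¹ = SemidirectProduct.inr (Multiplicative.ofAdd (-1)) := by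
  rw [tGen, ← map_inv]; rfl

/-- erase coordinate 0 of the shift-up of μ -/
def rho {Λ : Type*} [Group Λ] (μ : FinSupp Λ) : FinSupp Λ :=
  ⟨fun j => if j = 0 then 1 else μ.val (j - 1), (μ.prop.image (· + 1)).subset (by
    intro j hj
    refine ⟨j - 1, ?_, by ring⟩
    intro h
    apply hj
    simp only [h]
    split <;> rfl)⟩

lemma key_identity {Λ : Type*} [Group Λ] (μ : FinSupp Λ) (x : Λ) :
    SemidirectProduct.inl μ * (tGen Λ)⁻¹ * SemidirectProduct.inl (lam 0 x)
      = (tGen Λ)⁻¹ * SemidirectProduct.inl (lam 0 (μ.val (-1) * x))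
          * SemidirectProduct.inl (rho μ) := by
  rw [tGen_inv]
  refine SemidirectProduct.ext ?_ (by simp)
  simp only [SemidirectProduct.mul_left, SemidirectProduct.mul_right,
    SemidirectProduct.left_inl, SemidirectProduct.right_inl, SemidirectProduct.left_inr,
    SemidirectProduct.right_inr, map_one, MulAut.one_apply, mul_one, one_mul]
  refine Subtype.ext (funext fun i => ?_)
  have h1 := phi_neg_val (Λ := Λ) (lam 0 x) i
  have h2 := phi_neg_val (Λ := Λ) (lam 0 (μ.val (-1) * x)) i
  have h3 := phi_neg_val (Λ := Λ) (rho μ) i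
  show (μ.val * _) i = ((_ * _ : ℤ → Λ)) i
  simp only [Pi.mul_apply, h1, h2, h3]
  simp only [lam, rho]
  rcases eq_or_ne i (-1) with h | h
  · subst h; norm_num
  · have h' : i + 1 ≠ 0 := by omega
    simp [if_neg (by omega : ¬ i + 1 = (0:ℤ)), h']

/-- if `σ : G → Bool` satisfies the conformist (non-unanimous strict
majority) condition on every role model set, then `σ` is constant on cosets of elements
supported on coordinates `−1, …, −n`: `σ(g μ) = σ(g)`. -/
theorem conformist_constant {Λ : Type*} [Group Λ] [Fintype Λ] [DecidableEq Λ] {ℓ : ℕ}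
    (hℓ : 3 ≤ ℓ) (hcard : Fintype.card Λ = ℓ) (σ : Lamp Λ → Bool)
    (hσ : ∀ g : Lamp Λ,
      ℓ < 2 * (Finset.univ.filter (fun x : Λ =>
          σ (g * (tGen Λ)⁻¹ * SemidirectProduct.inl (lam 0 x)) = σ g)).card ∧
      (Finset.univ.filter (fun x : Λ =>
          σ (g * (tGen Λ)⁻¹ * SemidirectProduct.inl (lam 0 x)) = σ g)).card < ℓ) :
    ∀ (g : Lamp Λ) (n : ℕ), 1 ≤ n → ∀ μ : FinSupp Λ,
      (∀ i : ℤ, μ.val i ≠ 1 → -(n : ℤ) ≤ i ∧ i ≤ -1) →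
      σ (g * SemidirectProduct.inl μ) = σ g := by
  suffices H : ∀ (n : ℕ) (g : Lamp Λ) (μ : FinSupp Λ),
      (∀ i : ℤ, μ.val i ≠ 1 → -(n : ℤ) ≤ i ∧ i ≤ -1) →
      σ (g * SemidirectProduct.inl μ) = σ g by
    intro g n _ μ hμ
    exact H n g μ hμ
  intro n
  induction n with
  | zero =>
    intro g μ hμ
    have : μ = 1 := by
      refine Subtype.ext (funext fun i => ?_)
      by_contra h
      have := hμ i h
      omega
    rw [this, map_one, mul_one]
  | succ n ih =>
    intro g μ hμ
    -- support bound for rho μ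
    have hρ : ∀ i : ℤ, (rho μ).val i ≠ 1 → -(n : ℤ) ≤ i ∧ i ≤ -1 := by
      intro i hi
      simp only [rho] at hi
      rcases eq_or_ne i 0 with h | h
      · simp [h] at hi
      · rw [if_neg h] at hi
        have := hμ (i - 1) hi
        push_cast at this ⊢
        omega
    -- for every x, σ (g μ t⁻¹ [x]₀) = σ (g t⁻¹ [μ₋₁ x]₀)
    have hval : ∀ x : Λ,
        σ (g * SemidirectProduct.inl μ * (tGen Λ)⁻¹ * SemidirectProduct.inl (lam 0 x))
          = σ (g * (tGen Λ)⁻¹ * SemidirectProduct.inl (lam 0 (μ.val (-1) * x))) := by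
      intro x
      have : g * SemidirectProduct.inl μ * (tGen Λ)⁻¹ * SemidirectProduct.inl (lam 0 x)
          = (g * (tGen Λ)⁻¹ * SemidirectProduct.inl (lam 0 (μ.val (-1) * x)))
              * SemidirectProduct.inl (rho μ) := by
        have := key_identity μ x
        calc g * SemidirectProduct.inl μ * (tGen Λ)⁻¹ * SemidirectProduct.inl (lam 0 x)
            = g * (SemidirectProduct.inl μ * (tGen Λ)⁻¹ * SemidirectProduct.inl (lam 0 x)) := by
              group
          _ = g * ((tGen Λ)⁻¹ * SemidirectProduct.inl (lam 0 (μ.val (-1) * x))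
              * SemidirectProduct.inl (rho μ)) := by rw [this]
          _ = _ := by group
      rw [this, ih _ _ hρ]
    -- counting argument
    by_contra hne
    obtain ⟨h1, h1'⟩ := hσ g
    obtain ⟨h2, _⟩ := hσ (g * SemidirectProduct.inl μ)
    set b := μ.val (-1)
    set S1 := Finset.univ.filter (fun x : Λ =>
      σ (g * (tGen Λ)⁻¹ * SemidirectProduct.inl (lam 0 x)) = σ g) with hS1
    set S2 := Finset.univ.filter (fun x : Λ =>
      σ (g * SemidirectProduct.inl μ * (tGen Λ)⁻¹ * SemidirectProduct.inl (lam 0 x))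
        = σ (g * SemidirectProduct.inl μ)) with hS2
    set S2' := Finset.univ.filter (fun y : Λ =>
      σ (g * (tGen Λ)⁻¹ * SemidirectProduct.inl (lam 0 y))
        = σ (g * SemidirectProduct.inl μ)) with hS2'
    have hcard2 : S2.card = S2'.card := by
      apply Finset.card_bij (fun x _ => b * x)
      · intro x hx
        simp only [hS2, Finset.mem_filter, Finset.mem_univ, true_and] at hx
        simp only [hS2', Finset.mem_filter, Finset.mem_univ, true_and]
        rw [← hval x]; exact hx
      · intro x hx y hy hxy
        exact mul_left_cancel hxy
      · intro y hy
        refine ⟨b⁻¹ * y, ?_, by group⟩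
        simp only [hS2', Finset.mem_filter, Finset.mem_univ, true_and] at hy
        simp only [hS2, Finset.mem_filter, Finset.mem_univ, true_and]
        rw [hval (b⁻¹ * y)]
        rwa [mul_inv_cancel_left]
    have hdisj : Disjoint S1 S2' := by
      rw [Finset.disjoint_left]
      intro y hy1 hy2
      simp only [hS1, Finset.mem_filter, Finset.mem_univ, true_and] at hy1
      simp only [hS2', Finset.mem_filter, Finset.mem_univ, true_and] at hy2
      exact hne (hy2.symm.trans hy1)
    have hle : S1.card + S2'.card ≤ ℓ := by
      rw [← Finset.card_union_of_disjoint hdisj, ← hcard]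
      exact (Finset.card_le_card (Finset.subset_univ _)).trans_eq (Finset.card_univ)
    omega
end

section
/- Let Λ be a finite group of cardinality ℓ ≥ 3 and G = (⊕_ℤ Λ) ⋊ ℤ. Suppose σ : G → Bool satisfies: for every g ∈ G, the value σ(g) occurs strictly more than ℓ/2 but strictly fewer than ℓ times among {σ(g t⁻¹ [λ]₀) : λ ∈ Λ}. Then σ is not fixed by any finite index subgroup of G under the action (σ·g)(h) = σ(gh). Hence the conformist subshift is weakly aperiodic (given it is nonempty). -/
section Helpers
open SemidirectProduct

variable {Λ : Type*} [Group Λ]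

lemma finsupp_val_mul (f g : FinSupp Λ) (n : ℤ) : (f * g).val n = f.val n * g.val n := rfl

lemma lam_val (i : ℤ) (x : Λ) (n : ℤ) : (lam i x).val n = if n = i then x else 1 := rfl

lemma shiftAut_val (z : ℤ) (f : FinSupp Λ) (n : ℤ) : (shiftAut Λ z f).val n = f.val (n - z) := rfl

lemma shiftAut_mul (a b : ℤ) : shiftAut Λ a * shiftAut Λ b = shiftAut Λ (a + b) := by
  apply MulEquiv.ext; intro f
  apply Subtype.ext; funext n
  show f.val (n - a - b) = f.val (n - (a + b))
  congr 1; ring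

lemma shiftAut_zero : shiftAut Λ 0 = 1 := by
  apply MulEquiv.ext; intro f
  apply Subtype.ext; funext n
  show f.val (n - 0) = f.val n
  congr 1; ring

lemma shiftAut_zpow (z : ℤ) : (shiftAut Λ 1) ^ z = shiftAut Λ z := by
  induction z using Int.induction_on with
  | zero => rw [zpow_zero, shiftAut_zero]
  | succ n ih => rw [zpow_add, zpow_one, ih, shiftAut_mul]
  | pred n ih =>
      have h1 : (shiftAut Λ 1)⁻¹ = shiftAut Λ (-1) := by
        apply inv_eq_of_mul_eq_one_right
        rw [shiftAut_mul]
        norm_num [shiftAut_zero]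
      rw [sub_eq_add_neg, zpow_add, ih, zpow_neg, zpow_one, h1, shiftAut_mul]

lemma inr_conj (z : ℤ) (ν : FinSupp Λ) :
    SemidirectProduct.inr (Multiplicative.ofAdd z) * inl ν *
      (SemidirectProduct.inr (Multiplicative.ofAdd z) : Lamp Λ)⁻¹ = inl (shiftAut Λ z ν) := by
  rw [← map_inv]
  rw [← inl_aut (φ := zpowersHom _ (shiftAut Λ 1)) (Multiplicative.ofAdd z) ν]
  congr 1
  rw [zpowersHom_apply, toAdd_ofAdd, shiftAut_zpow]

lemma inl_mul_tinv (ν : FinSupp Λ) :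
    (inl ν : Lamp Λ) * (tGen Λ)⁻¹ = (tGen Λ)⁻¹ * inl (shiftAut Λ 1 ν) := by
  have h := inr_conj (Λ := Λ) 1 ν
  rw [show (SemidirectProduct.inr (Multiplicative.ofAdd (1:ℤ)) : Lamp Λ) = tGen Λ from rfl] at h
  rw [← h]; group

end Helpers

section Main
open SemidirectProduct Finset

variable {Λ : Type*} [Group Λ] [Fintype Λ] [DecidableEq Λ]

/-- σ is constant on right cosets of the negatively-supported part. -/
lemma const_on_neg {ℓ : ℕ} (hℓ : 3 ≤ ℓ) (hcard : Fintype.card Λ = ℓ) (σ : Lamp Λ → Bool)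
    (hσ : ∀ g : Lamp Λ,
      ℓ < 2 * (Finset.univ.filter (fun x : Λ =>
          σ (g * (tGen Λ)⁻¹ * SemidirectProduct.inl (lam 0 x)) = σ g)).card ∧
      (Finset.univ.filter (fun x : Λ =>
          σ (g * (tGen Λ)⁻¹ * SemidirectProduct.inl (lam 0 x)) = σ g)).card < ℓ) :
    ∀ (k : ℕ) (g : Lamp Λ) (ν : FinSupp Λ),
      (∀ n : ℤ, ν.val n ≠ 1 → -(k : ℤ) ≤ n ∧ n < 0) → σ (g * inl ν) = σ g := by
  intro k
  induction k with
  | zero =>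
      intro g ν hν
      have hν1 : ν = 1 := by
        apply Subtype.ext; funext n
        by_contra h
        have := hν n h
        omega
      rw [hν1, map_one, mul_one]
  | succ k ih =>
      intro g ν hν
      set ν' : FinSupp Λ := shiftAut Λ 1 ν with hν'
      set c : Λ := ν'.val 0 with hc
      have hν''fin : (Function.mulSupport (fun n : ℤ => if n = 0 then 1 else ν'.val n)).Finite := by
        apply ν'.prop.subset
        intro n hn
        simp only [Function.mem_mulSupport] at hn ⊢
        intro h
        rcases eq_or_ne n 0 with h0 | h0
        · exact hn (if_pos h0)
        · exact hn (by rw [if_neg h0]; exact h)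
      set ν'' : FinSupp Λ := ⟨fun n => if n = 0 then 1 else ν'.val n, hν''fin⟩ with hν''def
      have hν''val : ∀ n : ℤ, ν''.val n = if n = 0 then 1 else ν'.val n := by
        intro n; rw [hν''def]
      -- support bound for ν''
      have hν''supp : ∀ n : ℤ, ν''.val n ≠ 1 → -(k : ℤ) ≤ n ∧ n < 0 := by
        intro n hn
        have hn0 : n ≠ 0 := by
          intro h; apply hn; simp [hν''def, h]
        have hval : ν.val (n - 1) ≠ 1 := by
          intro h; apply hn
          simp only [hν''def, if_neg hn0, hν', shiftAut_val]
          exact h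
        have := hν (n - 1) hval
        push_cast at this ⊢
        omega
      -- key algebraic identity in FinSupp
      have key : ∀ x : Λ, ν' * lam 0 x = lam 0 (c * x) * ν'' := by
        intro x
        apply Subtype.ext; funext n
        show ν'.val n * (lam 0 x).val n = (lam 0 (c * x)).val n * ν''.val n
        rcases eq_or_ne n 0 with h0 | h0
        · subst h0
          rw [lam_val, lam_val, hν''val, if_pos rfl, if_pos rfl, if_pos rfl, hc, mul_one]
        · rw [lam_val, lam_val, hν''val, if_neg h0, if_neg h0, if_neg h0, mul_one, one_mul]
      -- the group identity
      have hx : ∀ x : Λ, g * inl ν * (tGen Λ)⁻¹ * inl (lam 0 x)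
          = g * (tGen Λ)⁻¹ * inl (lam 0 (c * x)) * inl ν'' := by
        intro x
        have h1 : (inl ν : Lamp Λ) * (tGen Λ)⁻¹ = (tGen Λ)⁻¹ * inl ν' := inl_mul_tinv ν
        calc g * inl ν * (tGen Λ)⁻¹ * inl (lam 0 x)
            = g * ((inl ν * (tGen Λ)⁻¹) * inl (lam 0 x)) := by group
          _ = g * (((tGen Λ)⁻¹ * inl ν') * inl (lam 0 x)) := by rw [h1]
          _ = g * ((tGen Λ)⁻¹ * inl (ν' * lam 0 x)) := by rw [map_mul]; group
          _ = g * ((tGen Λ)⁻¹ * inl (lam 0 (c * x) * ν'')) := by rw [key]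
          _ = g * (tGen Λ)⁻¹ * inl (lam 0 (c * x)) * inl ν'' := by rw [map_mul]; group
      -- σ value of perturbed role models
      have hval : ∀ x : Λ, σ (g * inl ν * (tGen Λ)⁻¹ * inl (lam 0 x))
          = σ (g * (tGen Λ)⁻¹ * inl (lam 0 (c * x))) := by
        intro x
        rw [hx x]
        exact ih (g * (tGen Λ)⁻¹ * inl (lam 0 (c * x))) ν'' hν''supp
      -- majority argument
      by_contra hne
      have hb : σ (g * inl ν) = ! σ g := Bool.eq_not_iff.mpr hne
      have h1 := (hσ g).1
      have h2 := (hσ (g * inl ν)).1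
      have hfe : (Finset.univ.filter (fun x : Λ =>
            σ (g * inl ν * (tGen Λ)⁻¹ * inl (lam 0 x)) = σ (g * inl ν)))
          = Finset.univ.filter (fun x : Λ =>
            σ (g * (tGen Λ)⁻¹ * inl (lam 0 (c * x))) = ! σ g) := by
        apply Finset.filter_congr
        intro x _
        rw [hval x, hb]
      rw [hfe] at h2
      have hcard2 : (Finset.univ.filter (fun x : Λ =>
            σ (g * (tGen Λ)⁻¹ * inl (lam 0 (c * x))) = ! σ g)).card
          = (Finset.univ.filter (fun y : Λ =>
            σ (g * (tGen Λ)⁻¹ * inl (lam 0 y)) = ! σ g)).card := by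
        apply Finset.card_equiv (Equiv.mulLeft c)
        intro x
        simp [Equiv.mulLeft]
      rw [hcard2] at h2
      have hsplit : (Finset.univ.filter (fun y : Λ =>
            σ (g * (tGen Λ)⁻¹ * inl (lam 0 y)) = σ g)).card
          + (Finset.univ.filter (fun y : Λ =>
            σ (g * (tGen Λ)⁻¹ * inl (lam 0 y)) = ! σ g)).card = ℓ := by
        have := Finset.card_filter_add_card_filter_not
          (s := (Finset.univ : Finset Λ))
          (fun y : Λ => σ (g * (tGen Λ)⁻¹ * inl (lam 0 y)) = σ g)
        rw [Finset.card_univ, hcard] at this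
        rw [← this]
        congr 1
        exact congrArg Finset.card (Finset.filter_congr fun y _ => Bool.eq_not_iff)
      omega

end Main


/-- Block of lamps with value `x` on `[0, k]`. -/
def blk {Λ : Type*} [Group Λ] (x : Λ) (k : ℕ) : FinSupp Λ :=
  ⟨fun n => if 0 ≤ n ∧ n ≤ (k : ℤ) then x else 1, (Set.finite_Icc (0 : ℤ) (k : ℤ)).subset (by
    intro n hn
    rw [Set.mem_Icc]
    by_contra h
    exact hn (if_neg h))⟩

lemma blk_val {Λ : Type*} [Group Λ] (x : Λ) (k : ℕ) (n : ℤ) :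
    (blk x k).val n = if 0 ≤ n ∧ n ≤ (k : ℤ) then x else 1 := rfl

/-- Block of lamps with value `x` on `(a, 0)`. -/
def negBlk {Λ : Type*} [Group Λ] (x : Λ) (a : ℤ) : FinSupp Λ :=
  ⟨fun n => if a < n ∧ n < 0 then x else 1, (Set.finite_Icc a (0 : ℤ)).subset (by
    intro n hn
    rw [Set.mem_Icc]
    by_contra h
    refine hn (if_neg ?_)
    intro hc
    exact h ⟨le_of_lt hc.1, le_of_lt hc.2⟩)⟩

lemma negBlk_val {Λ : Type*} [Group Λ] (x : Λ) (a : ℤ) (n : ℤ) :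
    (negBlk x a).val n = if a < n ∧ n < 0 then x else 1 := rfl

/-- if `σ : G → Bool` satisfies the conformist (non-unanimous strict
majority) condition on every role model set, then `σ` is not fixed by any finite index
subgroup of `G` under the action `(σ·g)(h) = σ(gh)`. -/
theorem conformist_weakly_aperiodic {Λ : Type*} [Group Λ] [Fintype Λ] [DecidableEq Λ] {ℓ : ℕ}
    (hℓ : 3 ≤ ℓ) (hcard : Fintype.card Λ = ℓ) (σ : Lamp Λ → Bool)
    (hσ : ∀ g : Lamp Λ,
      ℓ < 2 * (Finset.univ.filter (fun x : Λ =>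
          σ (g * (tGen Λ)⁻¹ * SemidirectProduct.inl (lam 0 x)) = σ g)).card ∧
      (Finset.univ.filter (fun x : Λ =>
          σ (g * (tGen Λ)⁻¹ * SemidirectProduct.inl (lam 0 x)) = σ g)).card < ℓ) :
    ¬ ∃ Γ : Subgroup (Lamp Λ), Γ.FiniteIndex ∧
        ∀ γ ∈ Γ, ∀ h : Lamp Λ, σ (γ * h) = σ h := by
  classical
  rintro ⟨Γ, hΓfi, hΓfix⟩
  haveI := hΓfi
  set N := Γ.normalCore with hNdef
  haveI : N.FiniteIndex := Γ.finiteIndex_normalCore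
  haveI : Finite (Lamp Λ ⧸ N) := Subgroup.finite_quotient_of_finiteIndex
  -- every single lamp at 0 has the same σ value as the identity
  have hconst : ∀ lV : Λ, σ (SemidirectProduct.inl (lam 0 lV)) = σ 1 := by
    intro lV
    have main : ∀ k m : ℕ, k < m →
        (QuotientGroup.mk (SemidirectProduct.inl (blk lV k)) : Lamp Λ ⧸ N) =
          QuotientGroup.mk (SemidirectProduct.inl (blk lV m)) →
        σ (SemidirectProduct.inl (lam 0 lV)) = σ 1 := by
      intro k m hkm hq
      have hkm' : (k : ℤ) < (m : ℤ) := by exact_mod_cast hkm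
      set d : FinSupp Λ := (blk lV k)⁻¹ * blk lV m with hd
      have hdN : (SemidirectProduct.inl d : Lamp Λ) ∈ N := by
        rw [hd, map_mul, map_inv]
        exact QuotientGroup.eq.mp hq
      set w : Lamp Λ := SemidirectProduct.inr (Multiplicative.ofAdd (-(m : ℤ))) *
        SemidirectProduct.inl d *
        (SemidirectProduct.inr (Multiplicative.ofAdd (-(m : ℤ))) : Lamp Λ)⁻¹ with hwdef
      have hwN : w ∈ N := (Subgroup.normalCore_normal Γ).conj_mem _ hdN _
      have hw : w = SemidirectProduct.inl (shiftAut Λ (-(m : ℤ)) d) := by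
        rw [hwdef]; exact inr_conj _ _
      -- the conjugated element equals `lam 0 lV * negBlk lV (k - m)`
      have heq2 : shiftAut Λ (-(m : ℤ)) d = lam 0 lV * negBlk lV ((k : ℤ) - m) := by
        apply Subtype.ext; funext n
        have hval : (shiftAut Λ (-(m : ℤ)) d).val n
            = ((blk lV k).val (n + m))⁻¹ * (blk lV m).val (n + m) := by
          rw [shiftAut_val]
          have h' : n - (-(m : ℤ)) = n + m := by ring
          rw [h']
          rfl
        rw [hval]
        show _ = (lam 0 lV * negBlk lV ((k : ℤ) - m)).val n
        rw [finsupp_val_mul, lam_val, blk_val, blk_val, negBlk_val]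
        split_ifs <;> first | (exfalso; omega) | simp
      -- ν is supported on [-(m), -1]
      have hsupp : ∀ n : ℤ, (negBlk lV ((k : ℤ) - m)).val n ≠ 1 → -(m : ℤ) ≤ n ∧ n < 0 := by
        intro n hn
        rw [negBlk_val] at hn
        have hcond : (k : ℤ) - m < n ∧ n < 0 := by
          by_contra h
          exact hn (if_neg h)
        omega
      have e1 : σ (SemidirectProduct.inl (lam 0 lV) *
            SemidirectProduct.inl (negBlk lV ((k : ℤ) - m)))
          = σ (SemidirectProduct.inl (lam 0 lV)) :=
        const_on_neg hℓ hcard σ hσ m (SemidirectProduct.inl (lam 0 lV)) _ hsupp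
      have e2 : SemidirectProduct.inl (lam 0 lV) *
          SemidirectProduct.inl (negBlk lV ((k : ℤ) - m)) = w := by
        rw [← map_mul, ← heq2, hw]
      have e3 : σ w = σ 1 := by
        have := hΓfix w (Subgroup.normalCore_le Γ hwN) 1
        rwa [mul_one] at this
      rw [← e1, e2, e3]
    obtain ⟨a, b, hab, habq⟩ := Finite.exists_ne_map_eq_of_infinite
      (fun k : ℕ => (QuotientGroup.mk (SemidirectProduct.inl (blk lV k)) : Lamp Λ ⧸ N))
    rcases Ne.lt_or_gt hab with hlt | hlt
    · exact main a b hlt habq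
    · exact main b a hlt habq.symm
  -- get two lamps with different σ values, contradiction
  obtain ⟨h1, h2⟩ := hσ (tGen Λ)
  have hsimp : ∀ x : Λ, tGen Λ * (tGen Λ)⁻¹ * SemidirectProduct.inl (lam 0 x)
      = SemidirectProduct.inl (lam 0 x) := by
    intro x; group
  obtain ⟨y, hy⟩ := Finset.card_pos.mp (by omega : 0 < (Finset.univ.filter (fun x : Λ =>
      σ (tGen Λ * (tGen Λ)⁻¹ * SemidirectProduct.inl (lam 0 x)) = σ (tGen Λ))).card)
  have hysig : σ (SemidirectProduct.inl (lam 0 y)) = σ (tGen Λ) := by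
    have := (Finset.mem_filter.mp hy).2
    rwa [hsimp] at this
  have hnsub : ¬ (Finset.univ : Finset Λ) ⊆ (Finset.univ.filter (fun x : Λ =>
      σ (tGen Λ * (tGen Λ)⁻¹ * SemidirectProduct.inl (lam 0 x)) = σ (tGen Λ))) := by
    intro hsub
    have := Finset.card_le_card hsub
    rw [Finset.card_univ, hcard] at this
    omega
  obtain ⟨x, -, hxS⟩ := Finset.not_subset.mp hnsub
  have hxsig : σ (SemidirectProduct.inl (lam 0 x)) ≠ σ (tGen Λ) := by
    intro h
    exact hxS (Finset.mem_filter.mpr ⟨Finset.mem_univ x, by rwa [hsimp]⟩)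
  exact hxsig ((hconst x).trans ((hconst y).symm.trans hysig))
end
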